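/- Let X be a set and let (H, e, ⋈) with j : F_X → H be a universal D-envelope of (F_X, ē). With a_ξ = j(ā_ξ), b_ξ = e − a_ξ, c_{ξ,η} = ⋈(0, a_ξ + a_η − e, a_ξ, a_η) for distinct ξ, η, and subgroups G_∅ = ℤe, G_{ξ} = ⟨a_ξ, b_ξ⟩, G_{ξ,η} = ⟨a_ξ, a_η, b_ξ, b_η, c_{ξ,η}⟩ of H, there exists an interpolator ι on H that is smoothening of level 2: every subgroup G_Z, for Z ⊆ X with at most two elements, is closed under ι (i.e. ι(x,x',y,y') ∈ G_Z whenever x, x', y, y' ∈ G_Z). -/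

import Mathlib

/-- An interpolator on a partially ordered abelian group. -/
def IsInterpolator {H : Type*} [AddCommGroup H] [PartialOrder H] [IsOrderedAddMonoid H] (ι : H → H → H → H → H) : Prop :=
  (∀ x x' y y', ι x x' y y' = ι x' x y y') ∧
  (∀ x x' y y', ι x x' y y' = ι x x' y' y) ∧
  (∀ x x' y y', x ≤ y → x ≤ y' → x' ≤ y → x' ≤ y' →
    (x ≤ ι x x' y y' ∧ x' ≤ ι x x' y y' ∧ ι x x' y y' ≤ y ∧ ι x x' y y' ≤ y'))

/-- A D-structure: an unperforated partially ordered abelian group with a distinguished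
positive element `e` such that `0 ≤ x` and `3x ≤ e` imply `x = 0`, and an interpolator. -/
def IsDStructure {H : Type*} [AddCommGroup H] [PartialOrder H] [IsOrderedAddMonoid H] (e : H) (ι : H → H → H → H → H) : Prop :=
  (∀ (m : ℕ) (x : H), 0 < m → 0 ≤ m • x → 0 ≤ x) ∧ 0 ≤ e ∧
  (∀ x : H, 0 ≤ x → 3 • x ≤ e → x = 0) ∧ IsInterpolator ι

/-- A D-morphism between D-structures. -/
def IsDMorphism {H K : Type*} [AddCommGroup H] [PartialOrder H] [IsOrderedAddMonoid H] [AddCommGroup K] [PartialOrder K] [IsOrderedAddMonoid K]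
    (eH : H) (ιH : H → H → H → H → H) (eK : K) (ιK : K → K → K → K → K)
    (h : H →+ K) : Prop :=
  Monotone h ∧ h eH = eK ∧
  ∀ x x' y y', h (ιH x x' y y') = ιK (h x) (h x') (h y) (h y')

/-- A universal D-envelope of a pointed partially ordered abelian group `(G, eG)`. -/
def IsUniversalDEnvelope {G H : Type*} [AddCommGroup G] [PartialOrder G] [IsOrderedAddMonoid G] [AddCommGroup H] [PartialOrder H] [IsOrderedAddMonoid H]
    (eG : G) (eH : H) (bow : H → H → H → H → H) (j : G →+ H) : Prop :=
  IsDStructure eH bow ∧ Monotone j ∧ j eG = eH ∧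
  ∀ (K : Type*) [AddCommGroup K] [PartialOrder K] [IsOrderedAddMonoid K], ∀ (eK : K) (ι : K → K → K → K → K),
    IsDStructure eK ι → ∀ (f : G →+ K), Monotone f → f eG = eK →
    ∃! h : H →+ K, IsDMorphism eH bow eK ι h ∧ ∀ g, h (j g) = f g

/-- The constant function `1` on the powerset of `X`. -/
def eBar (X : Type*) : Set X → ℤ := fun _ => 1

/-- The characteristic function of `{Y ⊆ X : ξ ∈ Y}`. -/
noncomputable def aBar {X : Type*} (ξ : X) : Set X → ℤ :=
  Set.indicator {Y : Set X | ξ ∈ Y} fun _ => 1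

/-- The subgroup of `Set X → ℤ` generated by `ē` and the `ā_ξ`, ordered componentwise. -/
noncomputable def FX (X : Type*) : AddSubgroup (Set X → ℤ) :=
  AddSubgroup.closure ({eBar X} ∪ Set.range (aBar (X := X)))

/-- `ē` as an element of `F_X`. -/
noncomputable def eElem (X : Type*) : FX X :=
  ⟨eBar X, AddSubgroup.subset_closure (Set.mem_union_left _ rfl)⟩

/-- `ā_ξ` as an element of `F_X`. -/
noncomputable def aElem {X : Type*} (ξ : X) : FX X :=
  ⟨aBar ξ, AddSubgroup.subset_closure (Set.mem_union_right _ ⟨ξ, rfl⟩)⟩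

/-- The subgroup `G_Z` of `H` associated with a subset `Z` of `X` with at most two
elements: it is generated by `e`, the `a_ξ` and `b_ξ = e - a_ξ` for `ξ ∈ Z`, and
the `c_{ξ,η}` for distinct `ξ, η ∈ Z`. -/
def Gsub {X H : Type*} [AddCommGroup H] [PartialOrder H] [IsOrderedAddMonoid H] (e : H) (a : X → H)
    (c : X → X → H) (Z : Set X) : AddSubgroup H :=
  AddSubgroup.closure
    ({e} ∪ (a '' Z) ∪ ((fun ξ => e - a ξ) '' Z) ∪
      {w | ∃ ξ ∈ Z, ∃ η ∈ Z, ξ ≠ η ∧ w = c ξ η})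

/-- The map `φ_ξ : ℤ² → H`, `(x₀, x₁) ↦ x₀ a_ξ + x₁ b_ξ`. -/
def phiMap {H : Type*} [AddCommGroup H] [PartialOrder H] [IsOrderedAddMonoid H] (e aξ : H) : ℤ × ℤ → H :=
  fun p => p.1 • aξ + p.2 • (e - aξ)

/-- The map `ψ_{ξ,η} : ℤ⁴ → H`,
`(x₀,x₁,x₂,x₃) ↦ x₀ c + x₁(a_ξ − c) + x₂(a_η − c) + x₃(c + e − a_ξ − a_η)`. -/
def psiMap {H : Type*} [AddCommGroup H] [PartialOrder H] [IsOrderedAddMonoid H] (e aξ aη c : H) : (Fin 4 → ℤ) → H :=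
  fun v => v 0 • c + v 1 • (aξ - c) + v 2 • (aη - c) + v 3 • (c + e - aξ - aη)

universe w

instance uliftIntOACG : IsOrderedAddMonoid (ULift.{w} ℤ) where
    add_le_add_left := by
      intro a b h c
      change a.down ≤ b.down at h
      change (_ + _ : ULift ℤ).down ≤ (_ + _ : ULift ℤ).down
      simp only [ULift.add_down]
      omega

def zIota : ULift.{w} ℤ → ULift.{w} ℤ → ULift.{w} ℤ → ULift.{w} ℤ → ULift.{w} ℤ :=
  fun p q _ _ => ULift.up (max p.down q.down)

lemma uliftInt_le_iff (x y : ULift.{w} ℤ) : x ≤ y ↔ x.down ≤ y.down := Iff.rfl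

lemma uliftInt_nsmul_down (m : ℕ) (x : ULift.{w} ℤ) : (m • x).down = m • x.down := by
  induction m with
  | zero => simp
  | succ n ih => rw [succ_nsmul, succ_nsmul, ← ih]; rfl

lemma uliftInt_down_eq_zero {x : ULift.{w} ℤ} (h : x.down = 0) : x = 0 := by
  cases x; cases h; rfl

lemma zDStructure : IsDStructure (ULift.up (1:ℤ)) (zIota.{w}) := by
  refine ⟨?_, ?_, ?_, ?_, ?_, ?_⟩
  · intro m x hm hx
    change (0:ℤ) ≤ x.down
    have h2 : (0:ℤ) ≤ (m • x).down := hx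
    rw [uliftInt_nsmul_down] at h2
    simp only [nsmul_eq_mul] at h2
    nlinarith [Int.natCast_pos.2 hm]
  · exact (uliftInt_le_iff _ _).2 (by norm_num)
  · intro x h0 h3
    have h2 : ((3:ℕ) • x).down ≤ 1 := h3
    rw [uliftInt_nsmul_down] at h2
    simp only [nsmul_eq_mul] at h2
    have h0' : (0:ℤ) ≤ x.down := h0
    exact uliftInt_down_eq_zero (by push_cast at h2; omega)
  · intro x x' y y'; simp [zIota, max_comm]
  · intro x x' y y'; rfl
  · intro x x' y y' h1 h2 h3 h4
    refine ⟨?_, ?_, ?_, ?_⟩ <;>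
      simp only [uliftInt_le_iff, zIota] at * <;> omega


noncomputable def evalFX {X : Type*} (Y : Set X) : FX X →+ ℤ :=
  (Pi.evalAddMonoidHom (fun _ : Set X => ℤ) Y).comp (FX X).subtype

lemma evalFX_monotone {X : Type*} (Y : Set X) : Monotone (evalFX (X := X) Y) := by
  intro g g' h
  exact (Subtype.coe_le_coe.2 h : (g : Set X → ℤ) ≤ (g' : Set X → ℤ)) Y

lemma evalFX_eElem {X : Type*} (Y : Set X) : evalFX Y (eElem X) = 1 := rfl

open Classical in
lemma evalFX_aElem {X : Type*} (Y : Set X) (ξ : X) :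
    evalFX Y (aElem ξ) = if ξ ∈ Y then 1 else 0 := by
  show aBar ξ Y = _
  rw [aBar, Set.indicator_apply]
  simp

lemma aElem_nonneg {X : Type*} (ξ : X) : (0 : FX X) ≤ aElem ξ := by
  show ((0 : FX X) : Set X → ℤ) ≤ (aElem ξ : Set X → ℤ)
  intro Y
  show (0:ℤ) ≤ aBar ξ Y
  classical
  rw [aBar, Set.indicator_apply]
  split <;> norm_num

lemma aElem_le_eElem {X : Type*} (ξ : X) : aElem ξ ≤ eElem X := by
  show (aElem ξ : Set X → ℤ) ≤ (eElem X : Set X → ℤ)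
  intro Y
  show aBar ξ Y ≤ 1
  classical
  rw [aBar, Set.indicator_apply]
  split <;> norm_num


section AuxG
variable {X : Type*} {H : Type*} [AddCommGroup H] [PartialOrder H] [IsOrderedAddMonoid H] {e : H} {a : X → H} {c : X → X → H}

lemma psiMap_add (e aξ aη cc : H) (v v' : Fin 4 → ℤ) :
    psiMap e aξ aη cc v + psiMap e aξ aη cc v' = psiMap e aξ aη cc (v + v') := by
  simp only [psiMap, Pi.add_apply, add_smul]; abel

lemma psiMap_sub (e aξ aη cc : H) (v v' : Fin 4 → ℤ) :
    psiMap e aξ aη cc v - psiMap e aξ aη cc v' = psiMap e aξ aη cc (v - v') := by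
  simp only [psiMap, Pi.sub_apply, sub_smul]; abel

lemma psiMap_neg (e aξ aη cc : H) (v : Fin 4 → ℤ) :
    - psiMap e aξ aη cc v = psiMap e aξ aη cc (-v) := by
  simp only [psiMap, Pi.neg_apply, neg_smul]; abel

lemma phiMap_sub (e aξ : H) (p p' : ℤ × ℤ) :
    phiMap e aξ p - phiMap e aξ p' = phiMap e aξ (p - p') := by
  simp only [phiMap, Prod.fst_sub, Prod.snd_sub, sub_smul]; abel

lemma Gsub_mono {Z Z' : Set X} (h : Z ⊆ Z') : Gsub e a c Z ≤ Gsub e a c Z' := by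
  apply AddSubgroup.closure_mono
  apply Set.union_subset_union
  · exact Set.union_subset_union (Set.union_subset_union le_rfl (Set.image_mono h))
      (Set.image_mono h)
  · rintro w ⟨ξ, hξ, η, hη, hne, rfl⟩
    exact ⟨ξ, h hξ, η, h hη, hne, rfl⟩

lemma e_mem_Gsub (Z : Set X) : e ∈ Gsub e a c Z :=
  AddSubgroup.subset_closure (Or.inl (Or.inl (Or.inl rfl)))

lemma a_mem_Gsub {Z : Set X} {ξ : X} (hξ : ξ ∈ Z) : a ξ ∈ Gsub e a c Z :=
  AddSubgroup.subset_closure (Or.inl (Or.inl (Or.inr ⟨ξ, hξ, rfl⟩)))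

lemma b_mem_Gsub {Z : Set X} {ξ : X} (hξ : ξ ∈ Z) : e - a ξ ∈ Gsub e a c Z :=
  AddSubgroup.subset_closure (Or.inl (Or.inr ⟨ξ, hξ, rfl⟩))

lemma c_mem_Gsub {Z : Set X} {ξ η : X} (hξ : ξ ∈ Z) (hη : η ∈ Z) (hne : ξ ≠ η) :
    c ξ η ∈ Gsub e a c Z :=
  AddSubgroup.subset_closure (Or.inr ⟨ξ, hξ, η, hη, hne, rfl⟩)

lemma phiMap_mem (ξ : X) (p : ℤ × ℤ) : phiMap e (a ξ) p ∈ Gsub e a c {ξ} := by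
  have h1 : a ξ ∈ Gsub e a c {ξ} := a_mem_Gsub (c := c) (Set.mem_singleton ξ)
  have h2 : e - a ξ ∈ Gsub e a c {ξ} := b_mem_Gsub (c := c) (Set.mem_singleton ξ)
  exact add_mem (zsmul_mem h1 _) (zsmul_mem h2 _)

lemma psiMap_mem {ξ η : X} (hne : ξ ≠ η) (v : Fin 4 → ℤ) :
    psiMap e (a ξ) (a η) (c ξ η) v ∈ Gsub e a c {ξ, η} := by
  have hξ : ξ ∈ ({ξ, η} : Set X) := Set.mem_insert ξ _
  have hη : η ∈ ({ξ, η} : Set X) := Set.mem_insert_iff.2 (Or.inr rfl)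
  have hc : c ξ η ∈ Gsub e a c {ξ, η} := c_mem_Gsub hξ hη hne
  have ha : a ξ ∈ Gsub e a c {ξ, η} := a_mem_Gsub (c := c) hξ
  have haη : a η ∈ Gsub e a c {ξ, η} := a_mem_Gsub (c := c) hη
  have he : e ∈ Gsub e a c {ξ, η} := e_mem_Gsub (a := a) (c := c) _
  exact add_mem (add_mem (add_mem (zsmul_mem hc _) (zsmul_mem (sub_mem ha hc) _))
    (zsmul_mem (sub_mem haη hc) _))
    (zsmul_mem (sub_mem (sub_mem (add_mem hc he) ha) haη) _)

lemma mem_Gsub_empty {w : H} (hw : w ∈ Gsub e a c (∅ : Set X)) : ∃ n : ℤ, w = n • e := by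
  have hs : ({e} ∪ (a '' (∅:Set X)) ∪ ((fun ξ => e - a ξ) '' ∅) ∪
      {w | ∃ ξ ∈ (∅:Set X), ∃ η ∈ (∅:Set X), ξ ≠ η ∧ w = c ξ η}) = {e} := by
    simp
  rw [Gsub, hs] at hw
  rw [← AddSubgroup.zmultiples_eq_closure] at hw
  obtain ⟨n, hn⟩ := AddSubgroup.mem_zmultiples_iff.1 hw
  exact ⟨n, hn.symm⟩

lemma mem_Gsub_singleton {ξ : X} {w : H} (hw : w ∈ Gsub e a c ({ξ} : Set X)) :
    ∃ p : ℤ × ℤ, w = phiMap e (a ξ) p := by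
  induction hw using AddSubgroup.closure_induction with
  | mem x hx =>
    rcases hx with ((hx | hx) | hx) | hx
    · refine ⟨(1, 1), ?_⟩
      rw [Set.mem_singleton_iff.1 hx]
      simp only [phiMap, one_smul]
      abel
    · obtain ⟨ζ, hζ, rfl⟩ := hx
      rw [Set.mem_singleton_iff.1 hζ]
      refine ⟨(1, 0), ?_⟩
      simp [phiMap]
    · obtain ⟨ζ, hζ, rfl⟩ := hx
      rw [Set.mem_singleton_iff.1 hζ]
      refine ⟨(0, 1), ?_⟩
      simp [phiMap]
    · obtain ⟨ζ, hζ, η, hη, hne, rfl⟩ := hx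
      rw [Set.mem_singleton_iff.1 hζ, Set.mem_singleton_iff.1 hη] at hne
      exact (hne rfl).elim
  | zero => exact ⟨(0, 0), by simp [phiMap]⟩
  | add x y _ _ hx hy =>
    obtain ⟨p, rfl⟩ := hx; obtain ⟨q, rfl⟩ := hy
    refine ⟨p + q, ?_⟩
    simp only [phiMap, Prod.fst_add, Prod.snd_add, add_smul]
    abel
  | neg x _ hx =>
    obtain ⟨p, rfl⟩ := hx
    refine ⟨-p, ?_⟩
    simp only [phiMap, Prod.fst_neg, Prod.snd_neg, neg_smul]
    abel

lemma mem_Gsub_pair {ξ η : X} (hcs : c η ξ = c ξ η) (hne : ξ ≠ η) {w : H}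
    (hw : w ∈ Gsub e a c ({ξ, η} : Set X)) :
    ∃ v : Fin 4 → ℤ, w = psiMap e (a ξ) (a η) (c ξ η) v := by
  induction hw using AddSubgroup.closure_induction with
  | mem x hx =>
    rcases hx with ((hx | hx) | hx) | hx
    · refine ⟨![1,1,1,1], ?_⟩
      rw [Set.mem_singleton_iff.1 hx]
      simp only [psiMap]
      simp only [Matrix.cons_val_zero, Matrix.cons_val_one, Matrix.head_cons,
        Matrix.cons_val_two, Matrix.cons_val_three, Matrix.tail_cons, one_smul]
      abel
    · obtain ⟨ζ, hζ, rfl⟩ := hx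
      rcases Set.mem_insert_iff.1 hζ with h | h
      · refine ⟨![1,1,0,0], ?_⟩
        rw [h]
        simp only [psiMap]
        simp only [Matrix.cons_val_zero, Matrix.cons_val_one, Matrix.head_cons,
          Matrix.cons_val_two, Matrix.cons_val_three, Matrix.tail_cons, one_smul, zero_smul]
        abel
      · refine ⟨![1,0,1,0], ?_⟩
        rw [Set.mem_singleton_iff.1 h]
        simp only [psiMap]
        simp only [Matrix.cons_val_zero, Matrix.cons_val_one, Matrix.head_cons,
          Matrix.cons_val_two, Matrix.cons_val_three, Matrix.tail_cons, one_smul, zero_smul]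
        abel
    · obtain ⟨ζ, hζ, rfl⟩ := hx
      rcases Set.mem_insert_iff.1 hζ with h | h
      · refine ⟨![0,0,1,1], ?_⟩
        rw [h]
        simp only [psiMap]
        simp only [Matrix.cons_val_zero, Matrix.cons_val_one, Matrix.head_cons,
          Matrix.cons_val_two, Matrix.cons_val_three, Matrix.tail_cons, one_smul, zero_smul]
        abel
      · refine ⟨![0,1,0,1], ?_⟩
        rw [Set.mem_singleton_iff.1 h]
        simp only [psiMap]
        simp only [Matrix.cons_val_zero, Matrix.cons_val_one, Matrix.head_cons,
          Matrix.cons_val_two, Matrix.cons_val_three, Matrix.tail_cons, one_smul, zero_smul]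
        abel
    · obtain ⟨ζ, hζ, ϑ, hϑ, hneζ, rfl⟩ := hx
      rcases Set.mem_insert_iff.1 hζ with h1 | h1 <;>
        rcases Set.mem_insert_iff.1 hϑ with h2 | h2
      · rw [h1, h2] at hneζ; exact (hneζ rfl).elim
      · rw [h1, Set.mem_singleton_iff.1 h2]
        refine ⟨![1,0,0,0], ?_⟩
        simp only [psiMap]
        simp only [Matrix.cons_val_zero, Matrix.cons_val_one, Matrix.head_cons,
          Matrix.cons_val_two, Matrix.cons_val_three, Matrix.tail_cons, one_smul, zero_smul]
        abel
      · rw [Set.mem_singleton_iff.1 h1, h2, hcs]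
        refine ⟨![1,0,0,0], ?_⟩
        simp only [psiMap]
        simp only [Matrix.cons_val_zero, Matrix.cons_val_one, Matrix.head_cons,
          Matrix.cons_val_two, Matrix.cons_val_three, Matrix.tail_cons, one_smul, zero_smul]
        abel
      · rw [Set.mem_singleton_iff.1 h1, Set.mem_singleton_iff.1 h2] at hneζ
        exact (hneζ rfl).elim
  | zero => exact ⟨0, by simp [psiMap]⟩
  | add x y _ _ hx hy =>
    obtain ⟨p, rfl⟩ := hx; obtain ⟨q, rfl⟩ := hy
    exact ⟨p + q, (psiMap_add _ _ _ _ _ _)⟩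
  | neg x _ hx =>
    obtain ⟨p, rfl⟩ := hx
    exact ⟨-p, (psiMap_neg _ _ _ _ _)⟩


end AuxG

def GoodW {X H : Type*} [AddCommGroup H] [PartialOrder H] [IsOrderedAddMonoid H] (e : H) (a : X → H) (c : X → X → H)
    (A B : Set H) (w : H) : Prop :=
  ((∀ u ∈ A, ∀ z ∈ B, u ≤ z) → (∀ u ∈ A, u ≤ w) ∧ (∀ z ∈ B, w ≤ z)) ∧
  (∀ Z : Set X, Z.Finite → Z.ncard ≤ 2 → (∀ u ∈ A, u ∈ Gsub e a c Z) →
    (∀ z ∈ B, z ∈ Gsub e a c Z) → w ∈ Gsub e a c Z)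

open Classical in
noncomputable def supFun {X H : Type*} [AddCommGroup H] [PartialOrder H] [IsOrderedAddMonoid H] (e : H) (a : X → H)
    (c : X → X → H) : Set H → Set H → H :=
  fun A B => if h : ∃ w, GoodW e a c A B w then h.choose else 0

lemma supFun_spec {X H : Type*} [AddCommGroup H] [PartialOrder H] [IsOrderedAddMonoid H] (e : H) (a : X → H) (c : X → X → H)
    (A B : Set H) (h : ∃ w, GoodW e a c A B w) : GoodW e a c A B (supFun e a c A B) := by
  rw [supFun, dif_pos h]
  exact h.choose_spec

universe u v

/-- **Lemma 4.2.** On the universal D-envelope `(H, e, ⋈)` of `(F_X, ē)` there exists a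
smoothening interpolator of level `2`: an interpolator `ι` such that every subgroup
`G_Z`, for `Z ⊆ X` with at most two elements, is closed under `ι`. -/
theorem exists_smoothening_interpolator {X : Type u} {H : Type v} [AddCommGroup H] [PartialOrder H] [IsOrderedAddMonoid H]
    (e : H) (bow : H → H → H → H → H) (j : FX X →+ H)
    (henv : IsUniversalDEnvelope (eElem X) e bow j)
    (a : X → H) (hadef : ∀ ξ, a ξ = j (aElem ξ))
    (c : X → X → H) (hcdef : ∀ ξ η, c ξ η = bow 0 (a ξ + a η - e) (a ξ) (a η)) :
    ∃ ι : H → H → H → H → H, IsInterpolator ι ∧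
      ∀ Z : Set X, Z.Finite → Z.ncard ≤ 2 →
        ∀ x x' y y' : H, x ∈ Gsub e a c Z → x' ∈ Gsub e a c Z →
          y ∈ Gsub e a c Z → y' ∈ Gsub e a c Z →
          ι x x' y y' ∈ Gsub e a c Z := by
  classical
  obtain ⟨hD, hjmono, hje, huniv⟩ := henv
  obtain ⟨hunperf, hepos, htriv, hbs1, hbs2, hbint⟩ := hD
  have hcsymm : ∀ ξ η, c η ξ = c ξ η := by
    intro ξ η
    rw [hcdef η ξ, hcdef ξ η, add_comm (a η) (a ξ)]
    exact hbs2 0 _ (a η) (a ξ)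
  -- the evaluation functionals
  have hexE : ∀ Y : Set X, ∃ E : H →+ ℤ, Monotone E ∧
      (∀ g : FX X, E (j g) = (g : Set X → ℤ) Y) ∧
      ∀ p q r s : H, E (bow p q r s) = max (E p) (E q) := by
    intro Y
    have fmono : Monotone ((AddEquiv.ulift.symm.toAddMonoidHom :
        ℤ →+ ULift ℤ).comp (evalFX Y)) := by
      intro g g' hg
      exact (uliftInt_le_iff _ _).2 (evalFX_monotone Y hg)
    have fval : ((AddEquiv.ulift.symm.toAddMonoidHom : ℤ →+ ULift ℤ).comp (evalFX Y))
        (eElem X) = ULift.up 1 := by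
      show AddEquiv.ulift.symm (evalFX Y (eElem X)) = _
      rw [evalFX_eElem]
      rfl
    obtain ⟨h, ⟨⟨hm, hee, hb⟩, hc⟩, -⟩ :=
      huniv (ULift ℤ) (ULift.up 1) zIota zDStructure
        ((AddEquiv.ulift.symm.toAddMonoidHom : ℤ →+ ULift ℤ).comp (evalFX Y)) fmono fval
    refine ⟨(AddEquiv.ulift.toAddMonoidHom : ULift ℤ →+ ℤ).comp h, ?_, ?_, ?_⟩
    · intro u v huv
      exact (uliftInt_le_iff _ _).1 (hm huv)
    · intro g
      show (h (j g)).down = _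
      rw [hc g]
      rfl
    · intro p q r s
      show (h (bow p q r s)).down = _
      rw [hb p q r s]
      rfl
  choose E Emono Ej Ebow using hexE
  -- values of the evaluations
  have Ee : ∀ Y : Set X, E Y e = 1 := by
    intro Y
    rw [← hje, Ej]
    rfl
  have Ea : ∀ (Y : Set X) (ξ : X), E Y (a ξ) = if ξ ∈ Y then 1 else 0 := by
    intro Y ξ
    rw [hadef, Ej]
    show aBar ξ Y = _
    rw [aBar, Set.indicator_apply]
    simp
  have Ec : ∀ (Y : Set X) (ξ η : X),
      E Y (c ξ η) = if ξ ∈ Y then (if η ∈ Y then 1 else 0) else 0 := by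
    intro Y ξ η
    rw [hcdef, Ebow, map_zero, map_sub, map_add, Ea, Ea, Ee]
    by_cases h1 : ξ ∈ Y <;> by_cases h2 : η ∈ Y <;> simp [h1, h2]
  have Esm : ∀ (Y : Set X) (n : ℤ), E Y (n • e) = n := by
    intro Y n
    rw [map_zsmul, Ee, smul_eq_mul, mul_one]
  -- positivity facts
  have ha0 : ∀ ξ, 0 ≤ a ξ := by
    intro ξ
    rw [hadef]
    have h := hjmono (aElem_nonneg ξ)
    rwa [map_zero] at h
  have hae : ∀ ξ, a ξ ≤ e := by
    intro ξ
    rw [hadef, ← hje]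
    exact hjmono (aElem_le_eElem ξ)
  have hcb : ∀ ξ η, 0 ≤ c ξ η ∧ a ξ + a η - e ≤ c ξ η ∧ c ξ η ≤ a ξ ∧ c ξ η ≤ a η := by
    intro ξ η
    have h1 : a ξ + a η - e ≤ a ξ := sub_le_iff_le_add.2 (add_le_add_right (hae η) _)
    have h2 : a ξ + a η - e ≤ a η := by
      rw [sub_le_iff_le_add, add_comm (a η) e]
      exact add_le_add_left (hae ξ) (a η)
    have h := hbint 0 (a ξ + a η - e) (a ξ) (a η) (ha0 ξ) (ha0 η) h1 h2
    rw [hcdef]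
    exact ⟨h.1, h.2.1, h.2.2.1, h.2.2.2⟩
  -- evaluation of the parametrizations
  have Ephi : ∀ (Y : Set X) (ξ : X) (p : ℤ × ℤ),
      E Y (phiMap e (a ξ) p) = if ξ ∈ Y then p.1 else p.2 := by
    intro Y ξ p
    show E Y (p.1 • a ξ + p.2 • (e - a ξ)) = _
    rw [map_add, map_zsmul, map_zsmul, map_sub, Ea, Ee]
    by_cases h : ξ ∈ Y <;> simp [h]
  have Epsi : ∀ (Y : Set X) (ξ η : X) (v : Fin 4 → ℤ),
      E Y (psiMap e (a ξ) (a η) (c ξ η) v) =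
        if ξ ∈ Y then (if η ∈ Y then v 0 else v 1) else (if η ∈ Y then v 2 else v 3) := by
    intro Y ξ η v
    show E Y (v 0 • c ξ η + v 1 • (a ξ - c ξ η) + v 2 • (a η - c ξ η) +
      v 3 • (c ξ η + e - a ξ - a η)) = _
    rw [map_add, map_add, map_add, map_zsmul, map_zsmul, map_zsmul, map_zsmul,
      map_sub, map_sub, map_sub, map_sub, map_add, Ea, Ea, Ec, Ee]
    by_cases h1 : ξ ∈ Y <;> by_cases h2 : η ∈ Y <;> simp [h1, h2] <;> ring
  -- positivity of the parametrizations
  have phi_nonneg : ∀ (ξ : X) (p : ℤ × ℤ), 0 ≤ p.1 → 0 ≤ p.2 → 0 ≤ phiMap e (a ξ) p := by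
    intro ξ p h1 h2
    exact add_nonneg (zsmul_nonneg (ha0 ξ) h1) (zsmul_nonneg (sub_nonneg.2 (hae ξ)) h2)
  have psi_nonneg : ∀ (ξ η : X) (v : Fin 4 → ℤ), (∀ i, 0 ≤ v i) →
      0 ≤ psiMap e (a ξ) (a η) (c ξ η) v := by
    intro ξ η v hv
    obtain ⟨hc0, hc1, hc2, hc3⟩ := hcb ξ η
    have h4 : (0:H) ≤ c ξ η + e - a ξ - a η := by
      have heq : c ξ η + e - a ξ - a η = c ξ η - (a ξ + a η - e) := by abel
      rw [heq]
      exact sub_nonneg.2 hc1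
    exact add_nonneg (add_nonneg (add_nonneg (zsmul_nonneg hc0 (hv 0))
      (zsmul_nonneg (sub_nonneg.2 hc2) (hv 1))) (zsmul_nonneg (sub_nonneg.2 hc3) (hv 2)))
      (zsmul_nonneg h4 (hv 3))
  -- shape of small sets
  have shape : ∀ Z : Set X, Z.Finite → Z.ncard ≤ 2 →
      Z = ∅ ∨ (∃ ξ, Z = {ξ}) ∨ (∃ ξ η, ξ ≠ η ∧ Z = {ξ, η}) := by
    intro Z hfin hcard
    rcases (by omega : Z.ncard = 0 ∨ Z.ncard = 1 ∨ Z.ncard = 2) with h | h | h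
    · exact Or.inl ((Set.ncard_eq_zero hfin).1 h)
    · exact Or.inr (Or.inl (Set.ncard_eq_one.1 h))
    · obtain ⟨p, q, hpq, rfl⟩ := Set.ncard_eq_two.1 h
      exact Or.inr (Or.inr ⟨p, q, hpq, rfl⟩)
  -- profiles of elements of small subgroups
  have prof : ∀ Z : Set X, Z.Finite → Z.ncard ≤ 2 → ∀ w ∈ Gsub e a c Z,
      ∀ Y Y' : Set X, Y ∩ Z = Y' ∩ Z → E Y w = E Y' w := by
    intro Z hfin hcard w hw Y Y' hYY
    rcases shape Z hfin hcard with rfl | ⟨ξ, rfl⟩ | ⟨ξ, η, hne, rfl⟩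
    · obtain ⟨n, rfl⟩ := mem_Gsub_empty hw
      rw [Esm, Esm]
    · obtain ⟨p, rfl⟩ := mem_Gsub_singleton hw
      have hmem : (ξ ∈ Y) ↔ (ξ ∈ Y') := by
        have h := Set.ext_iff.1 hYY ξ
        simpa [Set.mem_inter_iff] using h
      rw [Ephi, Ephi]
      by_cases h : ξ ∈ Y
      · rw [if_pos h, if_pos (hmem.1 h)]
      · rw [if_neg h, if_neg (fun h' => h (hmem.2 h'))]
    · obtain ⟨v, rfl⟩ := mem_Gsub_pair (hcsymm ξ η) hne hw
      have hξZ : ξ ∈ ({ξ, η} : Set X) := Set.mem_insert _ _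
      have hηZ : η ∈ ({ξ, η} : Set X) := Set.mem_insert_iff.2 (Or.inr rfl)
      have hmξ : (ξ ∈ Y) ↔ (ξ ∈ Y') := by
        have h := Set.ext_iff.1 hYY ξ
        simpa [Set.mem_inter_iff, hξZ] using h
      have hmη : (η ∈ Y) ↔ (η ∈ Y') := by
        have h := Set.ext_iff.1 hYY η
        simpa [Set.mem_inter_iff, hηZ] using h
      rw [Epsi, Epsi]
      simp only [hmξ, hmη]
  -- dropping a coordinate
  have drop1 : ∀ ξ : X, ∀ w ∈ Gsub e a c ({ξ} : Set X),
      E {ξ} w = E (∅ : Set X) w → w ∈ Gsub e a c (∅ : Set X) := by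
    intro ξ w hw hE
    obtain ⟨p, rfl⟩ := mem_Gsub_singleton hw
    rw [Ephi, Ephi, if_pos (Set.mem_singleton ξ), if_neg (Set.notMem_empty ξ)] at hE
    have heq : phiMap e (a ξ) p = p.1 • e := by
      show p.1 • a ξ + p.2 • (e - a ξ) = p.1 • e
      rw [← hE, smul_sub]
      abel
    rw [heq]
    exact zsmul_mem (e_mem_Gsub _) _
  have drop2 : ∀ ξ η : X, ξ ≠ η → ∀ w ∈ Gsub e a c ({ξ, η} : Set X),
      E {ξ, η} w = E {ξ} w → E {η} w = E (∅ : Set X) w →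
      w ∈ Gsub e a c ({ξ} : Set X) := by
    intro ξ η hne w hw h1 h2
    obtain ⟨v, rfl⟩ := mem_Gsub_pair (hcsymm ξ η) hne hw
    have hξp : ξ ∈ ({ξ, η} : Set X) := Set.mem_insert _ _
    have hηp : η ∈ ({ξ, η} : Set X) := Set.mem_insert_iff.2 (Or.inr rfl)
    have hηs : η ∉ ({ξ} : Set X) := fun h => hne (Set.mem_singleton_iff.1 h).symm
    have hξs : ξ ∉ ({η} : Set X) := fun h => hne (Set.mem_singleton_iff.1 h)
    rw [Epsi, Epsi, if_pos hξp, if_pos hηp, if_pos (Set.mem_singleton ξ), if_neg hηs] at h1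
    rw [Epsi, Epsi, if_neg hξs, if_pos (Set.mem_singleton η),
      if_neg (Set.notMem_empty ξ), if_neg (Set.notMem_empty η)] at h2
    have heq : psiMap e (a ξ) (a η) (c ξ η) v = v 0 • a ξ + v 2 • (e - a ξ) := by
      show v 0 • c ξ η + v 1 • (a ξ - c ξ η) + v 2 • (a η - c ξ η) +
        v 3 • (c ξ η + e - a ξ - a η) = _
      rw [← h1, ← h2]
      simp only [smul_sub, smul_add]
      abel
    rw [heq]
    exact add_mem (zsmul_mem (a_mem_Gsub (c := c) (Set.mem_singleton ξ)) _)
      (zsmul_mem (b_mem_Gsub (c := c) (Set.mem_singleton ξ)) _)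
  -- crossing between different small subgroups
  have inter_ne : ∀ (Z' : Set X) (t : X) (s : Set X), t ∉ Z' →
      (insert t s) ∩ Z' = s ∩ Z' := by
    intro Z' t s ht
    ext u
    simp only [Set.mem_inter_iff, Set.mem_insert_iff]
    constructor
    · rintro ⟨h | h, hu⟩
      · subst h; exact absurd hu ht
      · exact ⟨h, hu⟩
    · rintro ⟨h, hu⟩
      exact ⟨Or.inr h, hu⟩
  have singl_ne : ∀ (Z' : Set X) (t : X), t ∉ Z' → ({t} : Set X) ∩ Z' = (∅ : Set X) ∩ Z' := by
    intro Z' t ht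
    ext u
    simp only [Set.mem_inter_iff, Set.mem_singleton_iff, Set.mem_empty_iff_false,
      false_and, iff_false, not_and]
    rintro rfl
    exact ht
  have cross : ∀ Z' : Set X, ∀ Z : Set X, Z.Finite → Z.ncard ≤ 2 →
      ∀ w ∈ Gsub e a c Z, (∀ Y Y' : Set X, Y ∩ Z' = Y' ∩ Z' → E Y w = E Y' w) →
      w ∈ Gsub e a c Z' := by
    intro Z' Z hfin hcard w hw hprof
    rcases shape Z hfin hcard with rfl | ⟨ξ, rfl⟩ | ⟨ξ, η, hne, rfl⟩
    · exact Gsub_mono (Set.empty_subset _) hw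
    · by_cases hξ : ξ ∈ Z'
      · exact Gsub_mono (Set.singleton_subset_iff.2 hξ) hw
      · exact Gsub_mono (Set.empty_subset _)
          (drop1 ξ w hw (hprof _ _ (singl_ne Z' ξ hξ)))
    · by_cases hξ : ξ ∈ Z' <;> by_cases hη : η ∈ Z'
      · refine Gsub_mono ?_ hw
        intro t ht
        rcases Set.mem_insert_iff.1 ht with rfl | ht
        · exact hξ
        · rw [Set.mem_singleton_iff.1 ht]; exact hη
      · have hd := drop2 ξ η hne w hw
          (hprof _ _ (by rw [Set.pair_comm ξ η]; exact inter_ne Z' η {ξ} hη))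
          (hprof _ _ (singl_ne Z' η hη))
        exact Gsub_mono (Set.singleton_subset_iff.2 hξ) hd
      · have hw' : w ∈ Gsub e a c ({η, ξ} : Set X) := by
          rw [Set.pair_comm η ξ]; exact hw
        have hd := drop2 η ξ (Ne.symm hne) w hw'
          (hprof _ _ (by rw [Set.pair_comm η ξ]; exact inter_ne Z' ξ {η} hξ))
          (hprof _ _ (singl_ne Z' ξ hξ))
        exact Gsub_mono (Set.singleton_subset_iff.2 hη) hd
      · have hd := drop2 ξ η hne w hw
          (hprof _ _ (by rw [Set.pair_comm ξ η]; exact inter_ne Z' η {ξ} hη))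
          (hprof _ _ (singl_ne Z' η hη))
        exact Gsub_mono (Set.empty_subset _)
          (drop1 ξ w hd (hprof _ _ (singl_ne Z' ξ hξ)))
  -- local suprema
  have supex : ∀ Z : Set X, Z.Finite → Z.ncard ≤ 2 → ∀ x x' y y' : H,
      x ∈ Gsub e a c Z → x' ∈ Gsub e a c Z → y ∈ Gsub e a c Z → y' ∈ Gsub e a c Z →
      x ≤ y → x ≤ y' → x' ≤ y → x' ≤ y' →
      ∃ w ∈ Gsub e a c Z, x ≤ w ∧ x' ≤ w ∧ w ≤ y ∧ w ≤ y' ∧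
        ∀ Y : Set X, E Y w = max (E Y x) (E Y x') := by
    intro Z hfin hcard x x' y y' hx hx' hy hy' hxy hxy' hx'y hx'y'
    rcases shape Z hfin hcard with rfl | ⟨ξ, rfl⟩ | ⟨ξ, η, hne, rfl⟩
    · obtain ⟨m, rfl⟩ := mem_Gsub_empty hx
      obtain ⟨m', rfl⟩ := mem_Gsub_empty hx'
      obtain ⟨n, rfl⟩ := mem_Gsub_empty hy
      obtain ⟨n', rfl⟩ := mem_Gsub_empty hy'
      have key : ∀ p q : ℤ, p • e ≤ q • e → p ≤ q := by
        intro p q h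
        have h2 := Emono ∅ h
        rwa [Esm, Esm] at h2
      have hle : ∀ p q : ℤ, p ≤ q → p • e ≤ q • e := by
        intro p q h
        rw [← sub_nonneg, ← sub_smul]
        exact zsmul_nonneg hepos (by omega)
      refine ⟨(max m m') • e, zsmul_mem (e_mem_Gsub _) _, hle _ _ (le_max_left _ _),
        hle _ _ (le_max_right _ _), hle _ _ (max_le (key _ _ hxy) (key _ _ hx'y)),
        hle _ _ (max_le (key _ _ hxy') (key _ _ hx'y')), ?_⟩
      intro Y
      rw [Esm, Esm, Esm]
    · obtain ⟨p, rfl⟩ := mem_Gsub_singleton hx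
      obtain ⟨p', rfl⟩ := mem_Gsub_singleton hx'
      obtain ⟨q, rfl⟩ := mem_Gsub_singleton hy
      obtain ⟨q', rfl⟩ := mem_Gsub_singleton hy'
      have key : ∀ r s : ℤ × ℤ, phiMap e (a ξ) r ≤ phiMap e (a ξ) s → r.1 ≤ s.1 ∧ r.2 ≤ s.2 := by
        intro r s h
        constructor
        · have h2 := Emono {ξ} h
          rwa [Ephi, Ephi, if_pos (Set.mem_singleton ξ), if_pos (Set.mem_singleton ξ)] at h2
        · have h2 := Emono ∅ h
          rwa [Ephi, Ephi, if_neg (Set.notMem_empty ξ), if_neg (Set.notMem_empty ξ)] at h2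
      have hle : ∀ r s : ℤ × ℤ, r.1 ≤ s.1 → r.2 ≤ s.2 →
          phiMap e (a ξ) r ≤ phiMap e (a ξ) s := by
        intro r s h1 h2
        rw [← sub_nonneg, phiMap_sub]
        exact phi_nonneg ξ _ (by rw [Prod.fst_sub]; omega) (by rw [Prod.snd_sub]; omega)
      refine ⟨phiMap e (a ξ) (max p.1 p'.1, max p.2 p'.2), phiMap_mem ξ _,
        hle _ _ (le_max_left _ _) (le_max_left _ _),
        hle _ _ (le_max_right _ _) (le_max_right _ _),
        hle _ _ (max_le (key _ _ hxy).1 (key _ _ hx'y).1)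
          (max_le (key _ _ hxy).2 (key _ _ hx'y).2),
        hle _ _ (max_le (key _ _ hxy').1 (key _ _ hx'y').1)
          (max_le (key _ _ hxy').2 (key _ _ hx'y').2), ?_⟩
      intro Y
      rw [Ephi, Ephi, Ephi]
      by_cases h : ξ ∈ Y <;> simp [h]
    · have hξp : ξ ∈ ({ξ, η} : Set X) := Set.mem_insert _ _
      have hηp : η ∈ ({ξ, η} : Set X) := Set.mem_insert_iff.2 (Or.inr rfl)
      have hηs : η ∉ ({ξ} : Set X) := fun h => hne (Set.mem_singleton_iff.1 h).symm
      have hξs : ξ ∉ ({η} : Set X) := fun h => hne (Set.mem_singleton_iff.1 h)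
      obtain ⟨u, rfl⟩ := mem_Gsub_pair (hcsymm ξ η) hne hx
      obtain ⟨u', rfl⟩ := mem_Gsub_pair (hcsymm ξ η) hne hx'
      obtain ⟨t, rfl⟩ := mem_Gsub_pair (hcsymm ξ η) hne hy
      obtain ⟨t', rfl⟩ := mem_Gsub_pair (hcsymm ξ η) hne hy'
      have key : ∀ r s : Fin 4 → ℤ, psiMap e (a ξ) (a η) (c ξ η) r ≤
          psiMap e (a ξ) (a η) (c ξ η) s → ∀ i, r i ≤ s i := by
        intro r s h i
        have k0 := Emono {ξ, η} h
        rw [Epsi, Epsi, if_pos hξp, if_pos hξp, if_pos hηp, if_pos hηp] at k0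
        have k1 := Emono {ξ} h
        rw [Epsi, Epsi, if_pos (Set.mem_singleton ξ), if_pos (Set.mem_singleton ξ),
          if_neg hηs, if_neg hηs] at k1
        have k2 := Emono {η} h
        rw [Epsi, Epsi, if_neg hξs, if_neg hξs, if_pos (Set.mem_singleton η),
          if_pos (Set.mem_singleton η)] at k2
        have k3 := Emono ∅ h
        rw [Epsi, Epsi, if_neg (Set.notMem_empty ξ), if_neg (Set.notMem_empty ξ),
          if_neg (Set.notMem_empty η), if_neg (Set.notMem_empty η)] at k3
        fin_cases i
        · exact k0
        · exact k1
        · exact k2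
        · exact k3
      have hle : ∀ r s : Fin 4 → ℤ, (∀ i, r i ≤ s i) →
          psiMap e (a ξ) (a η) (c ξ η) r ≤ psiMap e (a ξ) (a η) (c ξ η) s := by
        intro r s h
        rw [← sub_nonneg, psiMap_sub]
        exact psi_nonneg ξ η _ (fun i => by rw [Pi.sub_apply]; have := h i; omega)
      refine ⟨psiMap e (a ξ) (a η) (c ξ η) (fun i => max (u i) (u' i)), psiMap_mem hne _,
        hle _ _ (fun i => le_max_left _ _), hle _ _ (fun i => le_max_right _ _),
        hle _ _ (fun i => max_le (key _ _ hxy i) (key _ _ hx'y i)),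
        hle _ _ (fun i => max_le (key _ _ hxy' i) (key _ _ hx'y' i)), ?_⟩
      intro Y
      rw [Epsi, Epsi, Epsi]
      by_cases h1 : ξ ∈ Y <;> by_cases h2 : η ∈ Y <;> simp [h1, h2]
  -- the main existence statement
  have main : ∀ x x' y y' : H, ∃ w : H, GoodW e a c {x, x'} {y, y'} w := by
    intro x x' y y'
    by_cases hord : x ≤ y ∧ x ≤ y' ∧ x' ≤ y ∧ x' ≤ y'
    · by_cases hZ : ∃ Z : Set X, Z.Finite ∧ Z.ncard ≤ 2 ∧ x ∈ Gsub e a c Z ∧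
          x' ∈ Gsub e a c Z ∧ y ∈ Gsub e a c Z ∧ y' ∈ Gsub e a c Z
      · obtain ⟨Z, hfin, hcard, hx, hx', hy, hy'⟩ := hZ
        obtain ⟨w, hwZ, hw1, hw2, hw3, hw4, hwprof⟩ :=
          supex Z hfin hcard x x' y y' hx hx' hy hy' hord.1 hord.2.1 hord.2.2.1 hord.2.2.2
        refine ⟨w, fun _ => ⟨?_, ?_⟩, ?_⟩
        · intro u hu
          rcases Set.mem_insert_iff.1 hu with rfl | hu
          · exact hw1
          · rw [Set.mem_singleton_iff.1 hu]; exact hw2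
        · intro z hz
          rcases Set.mem_insert_iff.1 hz with rfl | hz
          · exact hw3
          · rw [Set.mem_singleton_iff.1 hz]; exact hw4
        · intro Z' hfin' hcard' hA hB
          apply cross Z' Z hfin hcard w hwZ
          intro Y Y' hYY
          rw [hwprof, hwprof,
            prof Z' hfin' hcard' x (hA x (Set.mem_insert _ _)) Y Y' hYY,
            prof Z' hfin' hcard' x' (hA x' (Set.mem_insert_iff.2 (Or.inr rfl))) Y Y' hYY]
      · refine ⟨bow x x' y y', fun _ => ?_, ?_⟩
        · obtain ⟨b1, b2, b3, b4⟩ := hbint x x' y y' hord.1 hord.2.1 hord.2.2.1 hord.2.2.2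
          constructor
          · intro u hu
            rcases Set.mem_insert_iff.1 hu with rfl | hu
            · exact b1
            · rw [Set.mem_singleton_iff.1 hu]; exact b2
          · intro z hz
            rcases Set.mem_insert_iff.1 hz with rfl | hz
            · exact b3
            · rw [Set.mem_singleton_iff.1 hz]; exact b4
        · intro Z hfin hcard hA hB
          exact absurd ⟨Z, hfin, hcard, hA x (Set.mem_insert _ _),
            hA x' (Set.mem_insert_iff.2 (Or.inr rfl)), hB y (Set.mem_insert _ _),
            hB y' (Set.mem_insert_iff.2 (Or.inr rfl))⟩ hZ
    · refine ⟨0, fun hg => absurd ⟨hg x (Set.mem_insert _ _) y (Set.mem_insert _ _),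
        hg x (Set.mem_insert _ _) y' (Set.mem_insert_iff.2 (Or.inr rfl)),
        hg x' (Set.mem_insert_iff.2 (Or.inr rfl)) y (Set.mem_insert _ _),
        hg x' (Set.mem_insert_iff.2 (Or.inr rfl)) y' (Set.mem_insert_iff.2 (Or.inr rfl))⟩ hord,
        fun Z _ _ _ _ => zero_mem _⟩
  -- assembling the interpolator
  refine ⟨fun x x' y y' => supFun e a c {x, x'} {y, y'}, ⟨?_, ?_, ?_⟩, ?_⟩
  · intro x x' y y'
    show supFun e a c {x, x'} {y, y'} = supFun e a c {x', x} {y, y'}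
    rw [Set.pair_comm x x']
  · intro x x' y y'
    show supFun e a c {x, x'} {y, y'} = supFun e a c {x, x'} {y', y}
    rw [Set.pair_comm y y']
  · intro x x' y y' h1 h2 h3 h4
    obtain ⟨hord, -⟩ := supFun_spec e a c {x, x'} {y, y'} (main x x' y y')
    have hguard : ∀ u ∈ ({x, x'} : Set H), ∀ z ∈ ({y, y'} : Set H), u ≤ z := by
      intro u hu z hz
      rcases Set.mem_insert_iff.1 hu with rfl | hu <;>
        rcases Set.mem_insert_iff.1 hz with rfl | hz
      · exact h1
      · rw [Set.mem_singleton_iff.1 hz]; exact h2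
      · rw [Set.mem_singleton_iff.1 hu]; exact h3
      · rw [Set.mem_singleton_iff.1 hu, Set.mem_singleton_iff.1 hz]; exact h4
    obtain ⟨hup, hdown⟩ := hord hguard
    exact ⟨hup x (Set.mem_insert _ _), hup x' (Set.mem_insert_iff.2 (Or.inr rfl)),
      hdown y (Set.mem_insert _ _), hdown y' (Set.mem_insert_iff.2 (Or.inr rfl))⟩
  · intro Z hfin hcard x x' y y' hx hx' hy hy'
    obtain ⟨-, hcl⟩ := supFun_spec e a c {x, x'} {y, y'} (main x x' y y')
    refine hcl Z hfin hcard ?_ ?_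
    · intro u hu
      rcases Set.mem_insert_iff.1 hu with rfl | hu
      · exact hx
      · rw [Set.mem_singleton_iff.1 hu]; exact hx'
    · intro z hz
      rcases Set.mem_insert_iff.1 hz with rfl | hz
      · exact hy
      · rw [Set.mem_singleton_iff.1 hz]; exact hy'
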